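/- If α > 0, then the variance τ_N² of the number of pure Nash equilibria satisfies τ_N² / (1+α)^N → 1 as N → ∞; more precisely τ_N² = (1+α)^N (1 + c_N) with |c_N| → 0 geometrically fast. -/

import Mathlib

open Filter

/-- If `α > 0`, the variance `τ_N²` of the number of pure Nash equilibria (given by the
formula `τ_N² = 2^N b_N + 2^N N (α(1-β)^(2N-2) − (1-β)^(2N))`) satisfies
`τ_N² / (1+α)^N → 1`; more precisely `τ_N² = (1+α)^N (1 + c_N)` with `|c_N| → 0`
geometrically fast. -/
theorem variance_asymptotics (α β : ℝ) (hα0 : 0 < α) (hα1 : α < 1)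
    (hβα : β = (1 - α) / 2)
    (τsq : ℕ → ℝ)
    (hτ : ∀ N : ℕ, τsq N
      = 2 ^ N * ((1 - β) ^ N * (1 - (1 - β) ^ N))
        + 2 ^ N * N * (α * (1 - β) ^ (2 * N - 2) - (1 - β) ^ (2 * N))) :
    Tendsto (fun N : ℕ => τsq N / (1 + α) ^ N) atTop (nhds 1) ∧
      ∃ C r : ℝ, 0 ≤ r ∧ r < 1 ∧
        ∀ N : ℕ, |τsq N / (1 + α) ^ N - 1| ≤ C * r ^ N := by
  have hβ : 1 - β = (1 + α) / 2 := by rw [hβα]; ring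
  set ρ : ℝ := (1 + α) / 2 with hρdef
  have hρ0 : 0 < ρ := by rw [hρdef]; linarith
  have hρ1 : ρ < 1 := by rw [hρdef]; linarith
  have hρhalf : 1 / 2 < ρ := by rw [hρdef]; linarith
  set r : ℝ := Real.sqrt ρ with hrdef
  have hr0 : 0 < r := Real.sqrt_pos.mpr hρ0
  have hrr : r * r = ρ := Real.mul_self_sqrt hρ0.le
  have hr1 : r < 1 := by nlinarith [hrr, hr0]
  have h1α : (0:ℝ) < 1 + α := by linarith
  have hpowne : ∀ N : ℕ, ((1 + α):ℝ) ^ N ≠ 0 := fun N => (pow_pos h1α N).ne'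
  have h2ρ : (2:ℝ) * ρ = 1 + α := by rw [hρdef]; ring
  -- key identity for N = m+1
  have key : ∀ m : ℕ, τsq (m+1) / (1+α)^(m+1) - 1
      = -ρ^(m+1) + (m+1) * ρ^m * (α - ρ^2) / ρ := by
    intro m
    have hsub : 2 * (m+1) - 2 = 2 * m := by omega
    have hτm := hτ (m+1)
    rw [hβ, hsub] at hτm
    have hpow : ((1+α):ℝ)^(m+1) = 2^(m+1) * ρ^(m+1) := by
      rw [← h2ρ, mul_pow]
    rw [sub_eq_iff_eq_add, div_eq_iff (hpowne (m+1)), hτm, hpow]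
    push_cast
    field_simp
    ring
  -- bound |c_N| ≤ 6 * N * ρ^N for N ≥ 1
  have habs : ∀ m : ℕ, |τsq (m+1) / (1+α)^(m+1) - 1|
      ≤ 6 * ((m:ℝ)+1) * ρ^(m+1) := by
    intro m
    rw [key m]
    have hρm : (0:ℝ) < ρ^m := pow_pos hρ0 m
    have hρm1 : (0:ℝ) < ρ^(m+1) := pow_pos hρ0 (m+1)
    have hm0 : (0:ℝ) ≤ (m:ℝ) + 1 := by positivity
    have hαρ : |α - ρ^2| ≤ 1 := by
      have h2 : (0:ℝ) < ρ^2 := pow_pos hρ0 2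
      have h3 : ρ^2 < 1 := pow_lt_one₀ hρ0.le hρ1 (by norm_num)
      rw [abs_le]; constructor <;> nlinarith
    have t1 : |-ρ^(m+1)| = ρ^(m+1) := by
      rw [abs_neg, abs_of_nonneg hρm1.le]
    have t2 : |((m:ℝ)+1) * ρ^m * (α - ρ^2) / ρ| ≤ ((m:ℝ)+1) * ρ^m * 1 / ρ := by
      have hnum : |((m:ℝ)+1) * ρ^m * (α - ρ^2)| ≤ ((m:ℝ)+1) * ρ^m * 1 := by
        rw [abs_mul, abs_mul, abs_of_nonneg hm0, abs_of_nonneg hρm.le]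
        exact mul_le_mul_of_nonneg_left hαρ (by positivity)
      rw [abs_div, abs_of_pos hρ0]
      gcongr
    have t3 : ((m:ℝ)+1) * ρ^m * 1 / ρ ≤ 2 * (((m:ℝ)+1) * ρ^m) := by
      rw [mul_one, div_le_iff₀ hρ0]
      nlinarith [mul_nonneg hm0 hρm.le]
    have t4 : ρ^m ≤ 2 * ρ^(m+1) := by
      rw [pow_succ]; nlinarith
    have t5 : ((m:ℝ)+1) * ρ^m ≤ 2 * (((m:ℝ)+1) * ρ^(m+1)) := by
      nlinarith [mul_le_mul_of_nonneg_left t4 hm0]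
    calc |-ρ^(m+1) + ((m:ℝ)+1) * ρ^m * (α - ρ^2) / ρ|
        ≤ |-ρ^(m+1)| + |((m:ℝ)+1) * ρ^m * (α - ρ^2) / ρ| := abs_add_le _ _
      _ ≤ ρ^(m+1) + 2 * (((m:ℝ)+1) * ρ^m) := by rw [t1]; linarith
      _ ≤ 6 * ((m:ℝ)+1) * ρ^(m+1) := by nlinarith
  -- N * ρ^N ≤ (r/(1-r)) * r^N
  have hNρ : ∀ N : ℕ, (N:ℝ) * ρ^N ≤ (r/(1-r)) * r^N := by
    intro N
    have hrinv : (1:ℝ) ≤ 1/r := (one_le_div hr0).mpr hr1.le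
    have hbern : 1 + (N:ℝ) * (1/r - 1) ≤ (1/r)^N := by
      have := one_add_mul_le_pow (a := 1/r - 1) (by linarith) N
      simpa using this
    have hNle : (N:ℝ) * (1/r - 1) ≤ (1/r)^N := by linarith
    have hρrr : ρ^N = r^N * r^N := by rw [← mul_pow, hrr]
    rw [hρrr]
    have hrN : (0:ℝ) < r^N := pow_pos hr0 N
    have h1r : (0:ℝ) < 1 - r := by linarith
    rw [div_mul_eq_mul_div, le_div_iff₀ h1r]
    have hinv : (1/r)^N * r^N = 1 := by
      rw [← mul_pow, one_div_mul_cancel hr0.ne', one_pow]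
    have h2 : (N:ℝ) * (1/r - 1) * r^N ≤ (1/r)^N * r^N :=
      mul_le_mul_of_nonneg_right hNle hrN.le
    rw [hinv] at h2
    have h3 : (1/r - 1) = (1-r)/r := by field_simp
    rw [h3] at h2
    calc (N:ℝ) * (r^N * r^N) * (1 - r)
        = ((N:ℝ) * ((1-r)/r) * r^N) * (r * r^N) := by field_simp
      _ ≤ 1 * (r * r^N) := mul_le_mul_of_nonneg_right h2 (by positivity)
      _ = r * r^N := one_mul _
  set C : ℝ := 6 * (r/(1-r)) + 1 with hCdef
  have h1r : (0:ℝ) < 1 - r := by linarith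
  have hCpos : 0 < 6 * (r/(1-r)) := by positivity
  have hC1 : (1:ℝ) ≤ C := by rw [hCdef]; linarith
  have hbound : ∀ N : ℕ, |τsq N / (1 + α) ^ N - 1| ≤ C * r ^ N := by
    intro N
    cases N with
    | zero =>
        have h0 : τsq 0 = 0 := by rw [hτ 0]; norm_num
        simp [h0, hC1]
    | succ m =>
        have h1 := habs m
        have h2 := hNρ (m+1)
        push_cast at h2
        have hrN : (0:ℝ) ≤ r^(m+1) := (pow_pos hr0 _).le
        calc |τsq (m+1) / (1 + α) ^ (m+1) - 1|
            ≤ 6 * ((m:ℝ)+1) * ρ^(m+1) := h1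
          _ ≤ 6 * ((r/(1-r)) * r^(m+1)) := by linarith
          _ ≤ C * r^(m+1) := by rw [hCdef]; linarith
  refine ⟨?_, C, r, hr0.le, hr1, hbound⟩
  have hzero : Tendsto (fun N : ℕ => τsq N / (1 + α) ^ N - 1) atTop (nhds 0) := by
    refine squeeze_zero_norm (a := fun N : ℕ => C * r ^ N) ?_ ?_
    · exact fun N => by simpa [Real.norm_eq_abs] using hbound N
    · have h := (tendsto_pow_atTop_nhds_zero_of_lt_one hr0.le hr1).const_mul C
      rw [mul_zero] at h
      exact h
  have h := hzero.add_const 1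
  rw [zero_add] at h
  convert h using 2 with N
  ring
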